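/- arXiv:2409.00806 — 3 statements merged into one kernel-verified Lean document; each statement's English description precedes it below -/
import Mathlib

section
/- Let G be a countably infinite group, H ≤ G a subgroup, and V ⊆ H a subset that is a set of operatorial recurrence in G. Then V is a set of operatorial recurrence in H. -/
/-- `V` is a set of operatorial recurrence in `G`: for every unitary representation `π`
of `G` on a Hilbert space and every vector `ξ` with `⟨π(v)ξ, ξ⟩ = 0` for all `v ∈ V`,
the vector `ξ` is orthogonal to all `π(G)`-invariant vectors. -/
def IsOpRecurrenceSet (G : Type) [Group G] (V : Set G) : Prop :=
  ∀ (H : Type) (_ : NormedAddCommGroup H) (_ : InnerProductSpace ℂ H) (_ : CompleteSpace H),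
    ∀ (π : G →* (H ≃ₗᵢ[ℂ] H)) (ξ : H),
      (∀ v ∈ V, (inner ℂ ((π v) ξ) ξ : ℂ) = 0) →
      ∀ η : H, (∀ g : G, (π g) η = η) → (inner ℂ ξ η : ℂ) = 0

open scoped InnerProductSpace ENNReal

namespace OpRecAux

variable {G : Type} [Group G] {H : Subgroup G}

open Classical in
noncomputable def sec (H : Subgroup G) (q : G ⧸ H) : G :=
  if q = QuotientGroup.mk (1 : G) then 1 else q.out

lemma sec_spec (q : G ⧸ H) : QuotientGroup.mk (sec H q) = q := by
  unfold sec; split_ifs with h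
  · simp [h]
  · exact QuotientGroup.out_eq' q

lemma sec_one : sec H (QuotientGroup.mk (1 : G)) = 1 := by simp [sec]

/-- index type: `some` part carries induced rep, `none` carries a trivial copy -/
abbrev I (H : Subgroup G) : Type := Option (G ⧸ H)

noncomputable def imap (g : G) (i : I H) : I H := i.map (g • ·)

lemma imap_imap (g₁ g₂ : G) (i : I H) : imap g₁ (imap g₂ i) = imap (g₁ * g₂) i := by
  cases i <;> simp [imap, mul_smul]

lemma imap_one (i : I H) : imap (1 : G) i = i := by cases i <;> simp [imap]

lemma imap_inv_imap (g : G) (i : I H) : imap g⁻¹ (imap g i) = i := by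
  rw [imap_imap, inv_mul_cancel, imap_one]

lemma imap_imap_inv (g : G) (i : I H) : imap g (imap g⁻¹ i) = i := by
  rw [imap_imap, mul_inv_cancel, imap_one]

noncomputable def coc (g : G) (i : I H) : H :=
  match i with
  | none => 1
  | some q => ⟨(sec H (g • q))⁻¹ * g * sec H q, by
      rw [mul_assoc, ← QuotientGroup.eq, sec_spec]
      exact (congrArg (g • ·) (sec_spec q)).symm⟩

lemma coc_mul (g₁ g₂ : G) (i : I H) :
    coc (g₁ * g₂) i = coc g₁ (imap g₂ i) * coc g₂ i := by
  cases i with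
  | none => simp [coc, imap]
  | some q =>
    apply Subtype.ext
    simp only [coc, imap, Option.map_some, Subgroup.coe_mul, mul_smul]
    group

lemma coc_one (i : I H) : coc (1 : G) i = 1 := by
  cases i with
  | none => rfl
  | some q => apply Subtype.ext; simp [coc]

lemma coc_none (g : G) : coc g (none : I H) = 1 := rfl

lemma imap_none (g : G) : imap g (none : I H) = none := rfl

lemma coc_mem_one (v : G) (hv : v ∈ H) :
    coc v (some (QuotientGroup.mk (1:G)) : I H) = ⟨v, hv⟩ := by
  apply Subtype.ext
  have h1 : v • (QuotientGroup.mk (1:G) : G ⧸ H) = QuotientGroup.mk (1:G) := by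
    rw [MulAction.Quotient.smul_mk, QuotientGroup.eq]
    simpa using hv
  simp [coc, h1, sec_one]

lemma imap_mem_one (v : G) (hv : v ∈ H) :
    imap v (some (QuotientGroup.mk (1:G)) : I H) = some (QuotientGroup.mk (1:G)) := by
  have h1 : v • (QuotientGroup.mk (1:G) : G ⧸ H) = QuotientGroup.mk (1:G) := by
    rw [MulAction.Quotient.smul_mk, QuotientGroup.eq]
    simpa using hv
  simp [imap, h1]

end OpRecAux

namespace OpRecAux

variable {G : Type} [Group G] {H : Subgroup G}
variable {X : Type} [NormedAddCommGroup X] [InnerProductSpace ℂ X]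

/-- reindexing equiv of the index type -/
noncomputable def eI (H : Subgroup G) (g : G) : I H ≃ I H :=
  ⟨imap g, imap g⁻¹, imap_inv_imap g, imap_imap_inv g⟩

variable (ρ : H →* (X ≃ₗᵢ[ℂ] X))

noncomputable def phi2 {ι : Type} (u : ι → (X ≃ₗᵢ[ℂ] X)) (e : ι ≃ ι)
    (f : lp (fun _ : ι => X) 2) : lp (fun _ : ι => X) 2 :=
  ⟨fun i => u i (f (e.symm i)), by
    apply memℓp_gen
    have hs : Summable fun i : ι => ‖f i‖ ^ (2 : ℝ≥0∞).toReal :=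
      (memℓp_gen_iff (by norm_num)).mp (lp.memℓp f)
    have h2 : Summable fun i : ι => ‖f (e.symm i)‖ ^ (2 : ℝ≥0∞).toReal :=
      (e.symm.summable_iff).mpr hs
    have key : (fun i : ι => ‖u i (f (e.symm i))‖ ^ (2 : ℝ≥0∞).toReal)
        = fun i : ι => ‖f (e.symm i)‖ ^ (2 : ℝ≥0∞).toReal := by
      funext i
      rw [LinearIsometryEquiv.norm_map]
    rw [key]
    exact h2⟩

lemma phi2_apply {ι : Type} (u : ι → (X ≃ₗᵢ[ℂ] X)) (e : ι ≃ ι)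
    (f : lp (fun _ : ι => X) 2) (i : ι) : phi2 u e f i = u i (f (e.symm i)) := rfl

lemma phi2_norm {ι : Type} (u : ι → (X ≃ₗᵢ[ℂ] X)) (e : ι ≃ ι)
    (f : lp (fun _ : ι => X) 2) : ‖phi2 u e f‖ = ‖f‖ := by
  rw [lp.norm_eq_tsum_rpow (by norm_num : 0 < (2 : ℝ≥0∞).toReal),
    lp.norm_eq_tsum_rpow (by norm_num : 0 < (2 : ℝ≥0∞).toReal)]
  congr 1
  have h := (e.symm).tsum_eq (fun j => ‖f j‖ ^ (2 : ℝ≥0∞).toReal)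
  rw [← h]
  congr 1
  funext i
  rw [phi2_apply, LinearIsometryEquiv.norm_map]

lemma phi2_add {ι : Type} (u : ι → (X ≃ₗᵢ[ℂ] X)) (e : ι ≃ ι)
    (f g : lp (fun _ : ι => X) 2) : phi2 u e (f + g) = phi2 u e f + phi2 u e g := by
  apply lp.ext
  funext i
  simp only [lp.coeFn_add, Pi.add_apply, phi2_apply, map_add]

lemma phi2_smul {ι : Type} (u : ι → (X ≃ₗᵢ[ℂ] X)) (e : ι ≃ ι)
    (c : ℂ) (f : lp (fun _ : ι => X) 2) : phi2 u e (c • f) = c • phi2 u e f := by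
  apply lp.ext
  funext i
  simp only [lp.coeFn_smul, Pi.smul_apply, phi2_apply, map_smul]

noncomputable def phi (g : G) (f : lp (fun _ : I H => X) 2) : lp (fun _ : I H => X) 2 :=
  phi2 (fun i => ρ (coc g (imap g⁻¹ i))) (eI H g) f

lemma phi_apply (g : G) (f : lp (fun _ : I H => X) 2) (i : I H) :
    phi ρ g f i = ρ (coc g (imap g⁻¹ i)) (f (imap g⁻¹ i)) := rfl

lemma phi_phi (g₁ g₂ : G) (f : lp (fun _ : I H => X) 2) :
    phi ρ g₁ (phi ρ g₂ f) = phi ρ (g₁ * g₂) f := by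
  apply lp.ext
  funext i
  simp only [phi_apply]
  rw [imap_imap, ← mul_inv_rev]
  have hc : coc (g₁ * g₂) (imap (g₁ * g₂)⁻¹ i)
      = coc g₁ (imap g₂ (imap (g₁ * g₂)⁻¹ i)) * coc g₂ (imap (g₁ * g₂)⁻¹ i) := coc_mul _ _ _
  have him : imap g₂ (imap (g₁ * g₂)⁻¹ i) = imap g₁⁻¹ i := by
    rw [imap_imap]; congr 1; group
  rw [hc, him, map_mul]
  rfl

lemma phi_one (f : lp (fun _ : I H => X) 2) : phi ρ 1 f = f := by
  apply lp.ext
  funext i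
  simp [phi_apply, coc_one, imap_one]

lemma phi_norm (g : G) (f : lp (fun _ : I H => X) 2) : ‖phi ρ g f‖ = ‖f‖ :=
  phi2_norm _ _ _

end OpRecAux

namespace OpRecAux

variable {G : Type} [Group G] {H : Subgroup G}
variable {X : Type} [NormedAddCommGroup X] [InnerProductSpace ℂ X]
variable (ρ : H →* (X ≃ₗᵢ[ℂ] X))

noncomputable def sigmaOne (g : G) :
    lp (fun _ : I H => X) 2 ≃ₗᵢ[ℂ] lp (fun _ : I H => X) 2 where
  toFun := phi ρ g
  map_add' := phi2_add _ _
  map_smul' := phi2_smul _ _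
  invFun := phi ρ g⁻¹
  left_inv := fun f => by
    show phi ρ g⁻¹ (phi ρ g f) = f
    rw [phi_phi, inv_mul_cancel, phi_one]
  right_inv := fun f => by
    show phi ρ g (phi ρ g⁻¹ f) = f
    rw [phi_phi, mul_inv_cancel, phi_one]
  norm_map' := phi_norm ρ g

noncomputable def sigmaRep :
    G →* (lp (fun _ : I H => X) 2 ≃ₗᵢ[ℂ] lp (fun _ : I H => X) 2) where
  toFun := sigmaOne ρ
  map_one' := by
    apply LinearIsometryEquiv.ext
    intro f
    exact phi_one ρ f
  map_mul' := fun g₁ g₂ => by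
    apply LinearIsometryEquiv.ext
    intro f
    exact (phi_phi ρ g₁ g₂ f).symm

lemma sigmaRep_apply (g : G) (f : lp (fun _ : I H => X) 2) :
    sigmaRep ρ g f = phi ρ g f := rfl

variable [DecidableEq (G ⧸ H)]

lemma sigma_single_none (g : G) (w : X) :
    sigmaRep ρ g (lp.single 2 (none : I H) w) = lp.single 2 (none : I H) w := by
  rw [sigmaRep_apply]
  apply lp.ext
  funext i
  rw [phi_apply]
  cases i with
  | none =>
    have : imap g⁻¹ (none : I H) = none := rfl
    rw [this, coc_none, map_one, lp.single_apply_self]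
    rfl
  | some q =>
    have h1 : imap g⁻¹ (some q : I H) = some (g⁻¹ • q) := rfl
    rw [h1, lp.single_apply_ne 2 _ _ (by simp : (some (g⁻¹ • q) : I H) ≠ none),
      lp.single_apply_ne 2 _ _ (by simp : (some q : I H) ≠ none), map_zero]

lemma sigma_single_some (v : G) (hv : v ∈ H) (x : X) :
    sigmaRep ρ v (lp.single 2 (some (QuotientGroup.mk (1:G)) : I H) x)
      = lp.single 2 (some (QuotientGroup.mk (1:G)) : I H) (ρ ⟨v, hv⟩ x) := by
  rw [sigmaRep_apply]
  apply lp.ext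
  funext i
  rw [phi_apply]
  have hfix : imap v⁻¹ (some (QuotientGroup.mk (1:G)) : I H)
      = some (QuotientGroup.mk (1:G)) := imap_mem_one v⁻¹ (inv_mem hv)
  by_cases hi : i = (some (QuotientGroup.mk (1:G)) : I H)
  · subst hi
    rw [hfix, lp.single_apply_self, lp.single_apply_self, coc_mem_one v hv]
  · have h2 : imap v⁻¹ i ≠ (some (QuotientGroup.mk (1:G)) : I H) := by
      intro h
      apply hi
      have := congrArg (imap v) h
      rwa [imap_imap_inv, imap_mem_one v hv] at this
    rw [lp.single_apply_ne 2 _ _ h2, lp.single_apply_ne 2 _ _ hi, map_zero]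

end OpRecAux

namespace OpRecAux

variable {Γ : Type} [Group Γ]
variable {K : Type} [NormedAddCommGroup K] [InnerProductSpace ℂ K]
variable (π : Γ →* (K ≃ₗᵢ[ℂ] K))

/-- the submodule of `π`-invariant vectors -/
def invSub : Submodule ℂ K where
  carrier := {x | ∀ g, π g x = x}
  add_mem' := fun {a b} ha hb g => by rw [map_add, ha g, hb g]
  zero_mem' := fun g => map_zero _
  smul_mem' := fun c x hx g => by rw [map_smul, hx g]

lemma mem_invSub {x : K} : x ∈ invSub π ↔ ∀ g, π g x = x := Iff.rfl

lemma invSub_closed : IsClosed ((invSub π : Submodule ℂ K) : Set K) := by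
  have h : ((invSub π : Submodule ℂ K) : Set K) = ⋂ g, {x | π g x = x} := by
    ext x
    simp [mem_invSub, Set.mem_iInter]
  rw [h]
  exact isClosed_iInter fun g =>
    isClosed_eq (LinearIsometryEquiv.continuous _) continuous_id

lemma pi_mul_apply (g₁ g₂ : Γ) (x : K) : π g₁ (π g₂ x) = π (g₁ * g₂) x := by
  rw [map_mul]; rfl

lemma map_mem_orth {x : K} (hx : x ∈ (invSub π)ᗮ) (g : Γ) : π g x ∈ (invSub π)ᗮ := by
  intro u hu
  have h1 : π g (π g⁻¹ u) = u := by
    rw [pi_mul_apply, mul_inv_cancel, map_one]; rfl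
  have h2 : π g⁻¹ u = u := hu g⁻¹
  calc (inner ℂ u (π g x) : ℂ) = inner ℂ (π g (π g⁻¹ u)) (π g x) := by rw [h1]
    _ = inner ℂ (π g⁻¹ u) x := LinearIsometryEquiv.inner_map_map _ _ _
    _ = inner ℂ u x := by rw [h2]
    _ = 0 := hx u hu

/-- the restriction of `π` to the orthogonal complement of the invariant vectors -/
noncomputable def restrictRep : Γ →* (((invSub π)ᗮ : Submodule ℂ K) ≃ₗᵢ[ℂ] ((invSub π)ᗮ : Submodule ℂ K)) where
  toFun g :=
    { toFun := fun x => ⟨π g x, map_mem_orth π x.2 g⟩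
      map_add' := fun a b => Subtype.ext (by simp [map_add])
      map_smul' := fun c a => Subtype.ext (by simp)
      invFun := fun x => ⟨π g⁻¹ x, map_mem_orth π x.2 g⁻¹⟩
      left_inv := fun a => Subtype.ext (by
        show π g⁻¹ (π g a) = a
        rw [pi_mul_apply, inv_mul_cancel, map_one]; rfl)
      right_inv := fun a => Subtype.ext (by
        show π g (π g⁻¹ a) = a
        rw [pi_mul_apply, mul_inv_cancel, map_one]; rfl)
      norm_map' := fun a => by
        show ‖(⟨π g a, map_mem_orth π a.2 g⟩ : ((invSub π)ᗮ : Submodule ℂ K))‖ = ‖a‖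
        have h1 : ‖(⟨π g a, map_mem_orth π a.2 g⟩ : ((invSub π)ᗮ : Submodule ℂ K))‖
            = ‖π g (a : K)‖ := rfl
        rw [h1, LinearIsometryEquiv.norm_map]
        rfl }
  map_one' := by
    apply LinearIsometryEquiv.ext
    intro x
    apply Subtype.ext
    show π 1 x = x
    rw [map_one]; rfl
  map_mul' := fun g₁ g₂ => by
    apply LinearIsometryEquiv.ext
    intro x
    apply Subtype.ext
    show π (g₁ * g₂) x = π g₁ (π g₂ x)
    rw [pi_mul_apply]

lemma restrictRep_coe (g : Γ) (x : ((invSub π)ᗮ : Submodule ℂ K)) :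
    (restrictRep π g x : K) = π g x := rfl

end OpRecAux

lemma OpRecAux.nonempty_of_isOpRec' {G : Type} [Group G] {V : Set G}
    (hV : ∀ (H : Type) (_ : NormedAddCommGroup H) (_ : InnerProductSpace ℂ H)
        (_ : CompleteSpace H),
      ∀ (π : G →* (H ≃ₗᵢ[ℂ] H)) (ξ : H),
        (∀ v ∈ V, (inner ℂ ((π v) ξ) ξ : ℂ) = 0) →
        ∀ η : H, (∀ g : G, (π g) η = η) → (inner ℂ ξ η : ℂ) = 0) : V.Nonempty := by
  by_contra hne
  rw [Set.not_nonempty_iff_eq_empty] at hne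
  have h := hV ℂ inferInstance inferInstance inferInstance 1 1
    (by simp [hne]) 1 (fun g => rfl)
  simp [RCLike.inner_apply] at h

theorem opRecurrence_of_subgroup' (G : Type) [Group G] [Countable G] [Infinite G]
    (H : Subgroup G) (V : Set G) (hVH : V ⊆ (H : Set G))
    (hV : ∀ (K : Type) (_ : NormedAddCommGroup K) (_ : InnerProductSpace ℂ K)
        (_ : CompleteSpace K),
      ∀ (π : G →* (K ≃ₗᵢ[ℂ] K)) (ξ : K),
        (∀ v ∈ V, (inner ℂ ((π v) ξ) ξ : ℂ) = 0) →
        ∀ η : K, (∀ g : G, (π g) η = η) → (inner ℂ ξ η : ℂ) = 0) :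
    ∀ (K : Type) (_ : NormedAddCommGroup K) (_ : InnerProductSpace ℂ K)
        (_ : CompleteSpace K),
      ∀ (π : H →* (K ≃ₗᵢ[ℂ] K)) (ξ : K),
        (∀ v ∈ {h : H | (h : G) ∈ V}, (inner ℂ ((π v) ξ) ξ : ℂ) = 0) →
        ∀ η : K, (∀ g : H, (π g) η = η) → (inner ℂ ξ η : ℂ) = 0 := by
  classical
  intro K _ _ _ π ξ hinner η hη
  letI : DecidableEq (G ⧸ H) := Classical.decEq _
  set M : Submodule ℂ K := OpRecAux.invSub π with hMdef
  haveI : CompleteSpace M := (OpRecAux.invSub_closed π).completeSpace_coe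
  obtain ⟨ξ₁, hξ₁, ξ₀, hξ₀, hsum⟩ := M.exists_add_mem_mem_orthogonal ξ
  have hηM : η ∈ M := hη
  by_cases hbot : Mᗮ = ⊥
  · -- everything is invariant; use a single element of V
    have hξ0 : ξ₀ = 0 := by
      have h := hξ₀; rw [hbot] at h; simpa using h
    have hξM : ξ ∈ M := by rw [hsum, hξ0, add_zero]; exact hξ₁
    obtain ⟨v₀, hv₀⟩ := OpRecAux.nonempty_of_isOpRec' hV
    have hv₀H : v₀ ∈ H := hVH hv₀
    have h0 : (inner ℂ (π ⟨v₀, hv₀H⟩ ξ) ξ : ℂ) = 0 := hinner ⟨v₀, hv₀H⟩ hv₀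
    rw [hξM ⟨v₀, hv₀H⟩, inner_self_eq_zero] at h0
    rw [h0, inner_zero_left]
  · obtain ⟨u, huM, hu0⟩ := Submodule.exists_mem_ne_zero_of_ne_bot hbot
    have hunorm : ‖u‖ ≠ 0 := by rwa [norm_ne_zero_iff]
    -- work in X = Mᗮ
    set ρ := OpRecAux.restrictRep π with hρdef
    set ξ₀' : (Mᗮ : Submodule ℂ K) := ⟨ξ₀, hξ₀⟩ with hξ₀'def
    set u' : (Mᗮ : Submodule ℂ K) := ⟨u, huM⟩ with hu'def
    set w' : (Mᗮ : Submodule ℂ K) := ((‖ξ₁‖ / ‖u‖ : ℝ) : ℂ) • u' with hw'def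
    have hwnorm : ‖w'‖ = ‖ξ₁‖ := by
      rw [hw'def, norm_smul]
      have h1 : ‖u'‖ = ‖u‖ := rfl
      rw [h1, Complex.norm_real, Real.norm_eq_abs,
        abs_of_nonneg (div_nonneg (norm_nonneg _) (norm_nonneg _)),
        div_mul_cancel₀ _ hunorm]
    have hww : (inner ℂ w' w' : ℂ) = inner ℂ ξ₁ ξ₁ := by
      rw [inner_self_eq_norm_sq_to_K, inner_self_eq_norm_sq_to_K, hwnorm]
    -- the induced-type representation
    set σ := OpRecAux.sigmaRep ρ with hσdef
    set q0 : OpRecAux.I H := some (QuotientGroup.mk (1 : G)) with hq0def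
    set s1 : lp (fun _ : OpRecAux.I H => (Mᗮ : Submodule ℂ K)) 2 := lp.single 2 q0 ξ₀' with hs1def
    set s2 : lp (fun _ : OpRecAux.I H => (Mᗮ : Submodule ℂ K)) 2 := lp.single 2 (none : OpRecAux.I H) w' with hs2def
    set ζ := s1 + s2 with hζdef
    have hσinv : ∀ g : G, σ g s2 = s2 := fun g => OpRecAux.sigma_single_none ρ g w'
    have hζq0 : ζ q0 = ξ₀' := by
      rw [hζdef, lp.coeFn_add, Pi.add_apply, hs1def, hs2def, lp.single_apply_self,
        lp.single_apply_ne 2 _ _ (by simp [hq0def] : q0 ≠ (none : OpRecAux.I H)), add_zero]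
    have hζnone : ζ (none : OpRecAux.I H) = w' := by
      rw [hζdef, lp.coeFn_add, Pi.add_apply, hs1def, hs2def, lp.single_apply_self,
        lp.single_apply_ne 2 _ _ (by simp [hq0def] : (none : OpRecAux.I H) ≠ q0), zero_add]
    have hinnerσ : ∀ v ∈ V, (inner ℂ (σ v ζ) ζ : ℂ) = 0 := by
      intro v hv
      have hvH : v ∈ H := hVH hv
      have hσζ : σ v ζ = lp.single 2 q0 (ρ ⟨v, hvH⟩ ξ₀') + s2 := by
        rw [hζdef, map_add, hσinv v, hσdef, hs1def, hq0def,
          OpRecAux.sigma_single_some ρ v hvH ξ₀']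
      rw [hσζ, inner_add_left, hs2def, lp.inner_single_left, lp.inner_single_left,
        hζq0, hζnone]
      -- reduce to K
      have hcoe1 : (inner ℂ (ρ ⟨v, hvH⟩ ξ₀') ξ₀' : ℂ) = inner ℂ ((π ⟨v, hvH⟩) ξ₀) ξ₀ := by
        rw [Submodule.coe_inner]
        rfl
      rw [hcoe1, hww]
      -- expand the hypothesis
      have h0 := hinner ⟨v, hvH⟩ hv
      have hπξ : π ⟨v, hvH⟩ ξ = ξ₁ + π ⟨v, hvH⟩ ξ₀ := by
        rw [hsum, map_add, hξ₁ ⟨v, hvH⟩]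
      rw [hπξ, hsum, inner_add_left, inner_add_right, inner_add_right] at h0
      have c1 : (inner ℂ ξ₁ ξ₀ : ℂ) = 0 :=
        Submodule.inner_right_of_mem_orthogonal hξ₁ hξ₀
      have c2 : (inner ℂ ((π ⟨v, hvH⟩) ξ₀) ξ₁ : ℂ) = 0 :=
        Submodule.inner_left_of_mem_orthogonal hξ₁ (OpRecAux.map_mem_orth π hξ₀ _)
      rw [c1, c2] at h0
      linear_combination h0
    have hmain := hV (lp (fun _ : OpRecAux.I H => (Mᗮ : Submodule ℂ K)) 2)
      inferInstance inferInstance inferInstance σ ζ hinnerσ s2 hσinv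
    rw [hs2def, lp.inner_single_right, hζnone, hww, inner_self_eq_zero] at hmain
    rw [hsum, hmain, zero_add]
    exact Submodule.inner_left_of_mem_orthogonal hηM hξ₀


/-- If `V ⊆ H ≤ G` is a set of operatorial recurrence in `G`, then it is one in `H`. -/
theorem opRecurrence_of_subgroup (G : Type) [Group G] [Countable G] [Infinite G]
    (H : Subgroup G) (V : Set G) (hVH : V ⊆ (H : Set G))
    (hV : IsOpRecurrenceSet G V) :
    IsOpRecurrenceSet H {h : H | (h : G) ∈ V} :=
  opRecurrence_of_subgroup' G H V hVH hV
end

section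
/- Let G be a countably infinite group and A ⊆ G an infinite subset. Then V = {a b^{-1} : a, b ∈ A, a ≠ b} is a set of operatorial recurrence in G. -/
/-- For any infinite `A ⊆ G`, the difference set `{a b⁻¹ : a ≠ b ∈ A}` is a set of
operatorial recurrence. -/
theorem opRecurrence_differenceSet (G : Type) [Group G] [Countable G] [Infinite G]
    (A : Set G) (hA : A.Infinite) :
    IsOpRecurrenceSet G {g : G | ∃ a ∈ A, ∃ b ∈ A, a ≠ b ∧ g = a * b⁻¹} := by
  intro H _ _ _ π ξ hV η hη
  by_contra hc
  set c : ℂ := inner ℂ ξ η with hcdef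
  have hcpos : 0 < ‖c‖ ^ 2 := by
    have : 0 < ‖c‖ := norm_pos_iff.mpr hc
    positivity
  -- orthogonality of the translates π(a)⁻¹ ξ
  have horth : ∀ a ∈ A, ∀ b ∈ A, a ≠ b →
      (inner ℂ ((π a⁻¹) ξ) ((π b⁻¹) ξ) : ℂ) = 0 := by
    intro a ha b hb hab
    have h := (π b).inner_map_map ((π a⁻¹) ξ) ((π b⁻¹) ξ)
    rw [← h]
    have h1 : (π b) ((π a⁻¹) ξ) = (π (b * a⁻¹)) ξ := by simp [map_mul]
    have h2 : (π b) ((π b⁻¹) ξ) = ξ := by simp [map_inv]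
    rw [h1, h2]
    exact hV _ ⟨b, hb, a, ha, hab.symm, rfl⟩
  -- each translate pairs with η the same way
  have hpair : ∀ a : G, (inner ℂ ((π a⁻¹) ξ) η : ℂ) = c := by
    intro a
    have h := (π a).inner_map_map ((π a⁻¹) ξ) η
    rw [← h]
    have h2 : (π a) ((π a⁻¹) ξ) = ξ := by simp [map_inv]
    rw [h2, hη a]
  -- for each n, n * ‖c‖² ≤ ‖ξ‖² * ‖η‖²
  have key : ∀ n : ℕ, (n : ℝ) * ‖c‖ ^ 2 ≤ ‖ξ‖ ^ 2 * ‖η‖ ^ 2 := by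
    intro n
    rcases Nat.eq_zero_or_pos n with h0 | hnpos
    · simp [h0]; positivity
    obtain ⟨S, hS, hcard⟩ := hA.exists_subset_card_eq n
    set w : H := ∑ a ∈ S, (π a⁻¹) ξ with hw
    have hinner_w : (inner ℂ w η : ℂ) = (n : ℂ) * c := by
      rw [hw, sum_inner]
      rw [Finset.sum_congr rfl fun a _ => hpair a]
      simp [hcard]
    have hnormw : ‖w‖ ^ 2 = (n : ℝ) * ‖ξ‖ ^ 2 := by
      have hww : (inner ℂ w w : ℂ) = (n : ℝ) * (‖ξ‖ : ℂ) ^ 2 := by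
        rw [hw, sum_inner]
        have hterm : ∀ a ∈ S,
            (inner ℂ ((π a⁻¹) ξ) (∑ b ∈ S, (π b⁻¹) ξ) : ℂ) = (‖ξ‖ : ℂ) ^ 2 := by
          intro a ha
          rw [inner_sum, Finset.sum_eq_single a]
          · rw [inner_self_eq_norm_sq_to_K]
            simp [(π a⁻¹).norm_map]
          · intro b hb hba
            exact horth a (hS ha) b (hS hb) (fun h => hba (h ▸ rfl))
          · intro h; exact absurd ha h
        rw [Finset.sum_congr rfl hterm]
        simp [hcard]
      rw [inner_self_eq_norm_sq_to_K] at hww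
      have hww' : ((‖w‖ ^ 2 : ℝ) : ℂ) = (((n : ℝ) * ‖ξ‖ ^ 2 : ℝ) : ℂ) := by
        push_cast
        exact hww
      exact_mod_cast hww'
    have hcs := norm_inner_le_norm (𝕜 := ℂ) w η
    rw [hinner_w] at hcs
    have hcs' : (n : ℝ) * ‖c‖ ≤ ‖w‖ * ‖η‖ := by
      simpa [norm_mul] using hcs
    have hsq : ((n : ℝ) * ‖c‖) ^ 2 ≤ (‖w‖ * ‖η‖) ^ 2 := by
      apply pow_le_pow_left₀ (by positivity) hcs'
    have hn' : (0 : ℝ) < n := by exact_mod_cast hnpos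
    have hsq' : (n : ℝ) ^ 2 * ‖c‖ ^ 2 ≤ (n : ℝ) * (‖ξ‖ ^ 2 * ‖η‖ ^ 2) := by
      nlinarith [hnormw, sq_nonneg ‖η‖]
    nlinarith [hsq', hn']
  -- contradiction via Archimedean property
  obtain ⟨n, hn⟩ := exists_nat_gt (‖ξ‖ ^ 2 * ‖η‖ ^ 2 / ‖c‖ ^ 2)
  have h3 : ‖ξ‖ ^ 2 * ‖η‖ ^ 2 < (n : ℝ) * ‖c‖ ^ 2 := by
    rw [div_lt_iff₀ hcpos] at hn
    linarith
  linarith [key n]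
end

section
/- Let G be a countably infinite group, H ≤ G a finite-index subgroup. Then G \ H is not a set of operatorial recurrence in G. -/
/-- The complement of a finite index subgroup is not a set of operatorial recurrence. -/
theorem not_opRecurrence_compl_finiteIndex (G : Type) [Group G] [Countable G] [Infinite G]
    (H : Subgroup G) [H.FiniteIndex] :
    ¬ IsOpRecurrenceSet G ((H : Set G)ᶜ) := by
  classical
  intro hrec
  haveI : Fintype (G ⧸ H) := Fintype.ofFinite _
  set Q := G ⧸ H
  -- the quasi-regular representation on ℓ²(G/H)
  let π : G →* (EuclideanSpace ℂ Q ≃ₗᵢ[ℂ] EuclideanSpace ℂ Q) :=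
    { toFun := fun g => LinearIsometryEquiv.piLpCongrLeft 2 ℂ ℂ (MulAction.toPerm g)
      map_one' := by
        ext v x
        simp [LinearIsometryEquiv.piLpCongrLeft_apply, Equiv.piCongrLeft'_apply]
      map_mul' := by
        intro a b
        ext v x
        simp [LinearIsometryEquiv.piLpCongrLeft_apply, Equiv.piCongrLeft'_apply]
        rw [mul_smul] }
  have hπ : ∀ (g : G) (v : EuclideanSpace ℂ Q) (x : Q), (π g) v x = v (g⁻¹ • x) := by
    intro g v x
    simp [π, LinearIsometryEquiv.piLpCongrLeft_apply, Equiv.piCongrLeft'_apply]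
  -- ξ = indicator of the identity coset, η = constant 1
  let ξ : EuclideanSpace ℂ Q := WithLp.toLp 2 (fun x : Q => if x = ((1 : G) : Q) then (1 : ℂ) else 0)
  let η : EuclideanSpace ℂ Q := WithLp.toLp 2 (fun _ : Q => (1 : ℂ))
  have hinv : ∀ g : G, (π g) η = η := by
    intro g; ext x; rw [hπ]
  have horth : ∀ v ∈ ((H : Set G)ᶜ), (inner ℂ ((π v) ξ) ξ : ℂ) = 0 := by
    intro v hv
    rw [PiLp.inner_apply]
    apply Finset.sum_eq_zero
    intro x _
    rw [hπ]
    by_cases hx : x = ((1 : G) : Q)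
    · subst hx
      have hne : (v⁻¹ • (((1 : G) : Q)) : Q) ≠ ((1 : G) : Q) := by
        intro h
        apply hv
        have : ((v⁻¹ : G) : Q) = ((1 : G) : Q) := by
          simpa using h
        have hmem : v⁻¹ ∈ H := by
          rw [QuotientGroup.eq] at this
          simpa using this
        simpa using H.inv_mem hmem
      simp [ξ, hne]
    · simp [ξ, hx]
  have := hrec (EuclideanSpace ℂ Q) inferInstance inferInstance inferInstance π ξ horth η hinv
  rw [PiLp.inner_apply] at this
  have hsum : (∑ i : Q, (inner ℂ (ξ i) (η i) : ℂ)) = 1 := by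
    simp [RCLike.inner_apply, ξ, η, Finset.sum_ite_eq']
    convert Finset.sum_ite_eq' Finset.univ ((1 : G) : Q) (fun _ => (1 : ℂ)) <;> simp
  rw [hsum] at this
  exact one_ne_zero this
end
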